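/- For all Δφ, δ, Δρ ∈ ℝ and all v ∈ ℂ: F(Δφ + δ, Δρ, e^{iδ}·v) = F(Δφ, Δρ, v). Consequently, v ∈ ℂ minimizes the function v ↦ F(Δφ, Δρ, v) over ℂ if and only if e^{iδ}·v minimizes the function v ↦ F(Δφ + δ, Δρ, v) over ℂ; in particular the optimal velocity of the single-sensor registration problem depends on the azimuth bias Δφ through a rotation by δ. -/

import Mathlib

/-- The index `k` (first of a consecutive pair) as an element of `Fin K`. -/
def loIdx {K : ℕ} (k : Fin (K - 1)) : Fin K := ⟨k.1, by have h := k.2; omega⟩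

/-- The index `k+1` (second of a consecutive pair) as an element of `Fin K`. -/
def hiIdx {K : ℕ} (k : Fin (K - 1)) : Fin K := ⟨k.1 + 1, by have h := k.2; omega⟩

/-- The bias-corrected measurement `g_k(Δφ, Δρ) = λ⁻¹ (ρ_k + Δρ) exp(i(φ_k + Δφ)) ∈ ℂ`. -/
noncomputable def gmeas {K : ℕ} (ρ φ : Fin K → ℝ) (lam : ℝ) (Δφ Δρ : ℝ) (k : Fin K) : ℂ :=
  ((lam⁻¹ * (ρ k + Δρ) : ℝ) : ℂ) * Complex.exp (Complex.I * ((φ k + Δφ : ℝ) : ℂ))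

/-- The single-sensor least-squares objective
`F(Δφ, Δρ, v) = Σ_{k=1}^{K−1} |g_{k+1}(Δφ, Δρ) − g_k(Δφ, Δρ) − T_k v|²`. -/
noncomputable def Fobj {K : ℕ} (ρ φ : Fin K → ℝ) (T : Fin (K - 1) → ℝ) (lam : ℝ)
    (Δφ Δρ : ℝ) (v : ℂ) : ℝ :=
  ∑ k : Fin (K - 1),
    ‖gmeas ρ φ lam Δφ Δρ (hiIdx k) - gmeas ρ φ lam Δφ Δρ (loIdx k)
      - (T k : ℂ) * v‖ ^ 2

lemma gmeas_shift {K : ℕ} (ρ φ : Fin K → ℝ) (lam : ℝ) (Δφ δ Δρ : ℝ) (k : Fin K) :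
    gmeas ρ φ lam (Δφ + δ) Δρ k
      = Complex.exp (Complex.I * (δ : ℂ)) * gmeas ρ φ lam Δφ Δρ k := by
  unfold gmeas
  push_cast
  rw [show Complex.I * ((φ k : ℂ) + ((Δφ : ℂ) + (δ : ℂ)))
      = Complex.I * (δ : ℂ) + Complex.I * ((φ k : ℂ) + (Δφ : ℂ)) by ring, Complex.exp_add]
  ring

lemma Fobj_shift {K : ℕ} (ρ φ : Fin K → ℝ) (T : Fin (K - 1) → ℝ) (lam : ℝ)
    (Δφ δ Δρ : ℝ) (v : ℂ) :
    Fobj ρ φ T lam (Δφ + δ) Δρ (Complex.exp (Complex.I * (δ : ℂ)) * v)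
      = Fobj ρ φ T lam Δφ Δρ v := by
  unfold Fobj
  refine Finset.sum_congr rfl fun k _ => ?_
  rw [gmeas_shift, gmeas_shift]
  have : Complex.exp (Complex.I * (δ : ℂ)) * gmeas ρ φ lam Δφ Δρ (hiIdx k)
      - Complex.exp (Complex.I * (δ : ℂ)) * gmeas ρ φ lam Δφ Δρ (loIdx k)
      - (T k : ℂ) * (Complex.exp (Complex.I * (δ : ℂ)) * v)
      = Complex.exp (Complex.I * (δ : ℂ))
        * (gmeas ρ φ lam Δφ Δρ (hiIdx k) - gmeas ρ φ lam Δφ Δρ (loIdx k) - (T k : ℂ) * v) := by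
    ring
  rw [this, norm_mul]
  have habs : ‖Complex.exp (Complex.I * (δ : ℂ))‖ = 1 := by
    rw [mul_comm, Complex.norm_exp_ofReal_mul_I]
  rw [habs, one_mul]

/-- Shifting the azimuth bias by `δ` rotates the optimal velocity by `e^{iδ}`:
`F(Δφ + δ, Δρ, e^{iδ}v) = F(Δφ, Δρ, v)`, and `v` minimizes `F(Δφ, Δρ, ·)` iff `e^{iδ}v`
minimizes `F(Δφ + δ, Δρ, ·)`. -/
theorem optimal_velocity_rotates_with_azimuth
    (K : ℕ) (hK : 2 ≤ K) (ρ φ : Fin K → ℝ) (T : Fin (K - 1) → ℝ) (lam : ℝ) (hlam : 0 < lam) :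
    (∀ (Δφ δ Δρ : ℝ) (v : ℂ),
      Fobj ρ φ T lam (Δφ + δ) Δρ (Complex.exp (Complex.I * (δ : ℂ)) * v)
        = Fobj ρ φ T lam Δφ Δρ v) ∧
    (∀ (Δφ δ Δρ : ℝ) (v : ℂ),
      (∀ w : ℂ, Fobj ρ φ T lam Δφ Δρ v ≤ Fobj ρ φ T lam Δφ Δρ w) ↔
      (∀ w : ℂ, Fobj ρ φ T lam (Δφ + δ) Δρ (Complex.exp (Complex.I * (δ : ℂ)) * v)
        ≤ Fobj ρ φ T lam (Δφ + δ) Δρ w)) := by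
  constructor
  · exact fun Δφ δ Δρ v => Fobj_shift ρ φ T lam Δφ δ Δρ v
  · intro Δφ δ Δρ v
    have hne : Complex.exp (Complex.I * (δ : ℂ)) ≠ 0 := Complex.exp_ne_zero _
    constructor
    · intro h w
      have hw : Complex.exp (Complex.I * (δ : ℂ))
          * ((Complex.exp (Complex.I * (δ : ℂ)))⁻¹ * w) = w := by
        rw [← mul_assoc, mul_inv_cancel₀ hne, one_mul]
      calc Fobj ρ φ T lam (Δφ + δ) Δρ (Complex.exp (Complex.I * (δ : ℂ)) * v)
          = Fobj ρ φ T lam Δφ Δρ v := Fobj_shift ρ φ T lam Δφ δ Δρ v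
        _ ≤ Fobj ρ φ T lam Δφ Δρ ((Complex.exp (Complex.I * (δ : ℂ)))⁻¹ * w) := h _
        _ = Fobj ρ φ T lam (Δφ + δ) Δρ w := by
            rw [← Fobj_shift ρ φ T lam Δφ δ Δρ, hw]
    · intro h w
      calc Fobj ρ φ T lam Δφ Δρ v
          = Fobj ρ φ T lam (Δφ + δ) Δρ (Complex.exp (Complex.I * (δ : ℂ)) * v) :=
            (Fobj_shift ρ φ T lam Δφ δ Δρ v).symm
        _ ≤ Fobj ρ φ T lam (Δφ + δ) Δρ (Complex.exp (Complex.I * (δ : ℂ)) * w) := h _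
        _ = Fobj ρ φ T lam Δφ Δρ w := Fobj_shift ρ φ T lam Δφ δ Δρ w
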